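/- Let A be a K×N real matrix, Σ_b an N×N symmetric positive semidefinite matrix, σ > 0, and suppose B = I - A Σ_b Aᵀ is positive definite. Define Φ = σ B^{-1/2} A, where B^{-1/2} is the symmetric positive definite square root of B^{-1}. Then (Φ Σ_b Φᵀ + σ² I)^{-1/2} Φ = A, where the inverse square root is the symmetric positive definite one. -/

import Mathlib

open Matrix
open scoped Matrix.Norms.L2Operator

/-- The square root of a positive semidefinite matrix, as defined in the older Mathlib
(`Matrix.PosSemidef.sqrt`, removed since). -/
noncomputable def Matrix.PosSemidef.sqrt {n : Type*} [Fintype n] [DecidableEq n] {𝕜 : Type*}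
    [RCLike 𝕜] [PartialOrder 𝕜] {A : Matrix n n 𝕜} (hA : A.PosSemidef) : Matrix n n 𝕜 :=
  hA.1.eigenvectorUnitary.1 * diagonal ((↑) ∘ (√·) ∘ hA.1.eigenvalues) *
    (star hA.1.eigenvectorUnitary : Matrix n n 𝕜)

open scoped MatrixOrder in
theorem Matrix.PosSemidef.sqrt_eq_cfc_sqrt {K : ℕ} {A : Matrix (Fin K) (Fin K) ℝ}
    (hA : A.PosSemidef) : hA.sqrt = CFC.sqrt A := by
  rw [CFC.sqrt_eq_cfc, cfc_nnreal_eq_real _ A, hA.1.cfc_eq]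
  have h0 : ∀ i, max (hA.1.eigenvalues i) 0 = hA.1.eigenvalues i :=
    fun i => max_eq_left (hA.eigenvalues_nonneg i)
  simp [IsHermitian.cfc, Matrix.PosSemidef.sqrt, Function.comp_def, h0, Unitary.conjStarAlgAut_apply]

open scoped MatrixOrder in
theorem Matrix.PosSemidef.posSemidef_sqrt {K : ℕ} {A : Matrix (Fin K) (Fin K) ℝ}
    (hA : A.PosSemidef) : hA.sqrt.PosSemidef := by
  rw [hA.sqrt_eq_cfc_sqrt]; exact (CFC.sqrt_nonneg A).posSemidef

open scoped MatrixOrder in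
theorem Matrix.PosSemidef.sqrt_mul_self {K : ℕ} {A : Matrix (Fin K) (Fin K) ℝ}
    (hA : A.PosSemidef) : hA.sqrt * hA.sqrt = A := by
  rw [hA.sqrt_eq_cfc_sqrt]; exact CFC.sqrt_mul_sqrt_self A hA.nonneg

open scoped MatrixOrder in
theorem Matrix.PosSemidef.eq_sqrt_of_sq_eq {K : ℕ} {A B : Matrix (Fin K) (Fin K) ℝ}
    (hB : B.PosSemidef) (hA : A.PosSemidef) (h : B ^ 2 = A) : B = hA.sqrt := by
  rw [hA.sqrt_eq_cfc_sqrt]; exact (CFC.sqrt_unique (by rw [← sq]; exact h) hB.nonneg).symm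

/-- With `B = 1 - A Sb Aᵀ` positive definite, `σ > 0`, and
`Φ = σ B^{-1/2} A` (where `B^{-1/2}` is the symmetric positive definite square root of `B⁻¹`),
the whitening filter satisfies `(Φ Sb Φᵀ + σ² I)^{-1/2} Φ = A`, the inverse square root being
the symmetric positive (semi)definite one. -/
theorem stmt2 {K N : ℕ}
    (A : Matrix (Fin K) (Fin N) ℝ) (Sb : Matrix (Fin N) (Fin N) ℝ)
    (hSb : Sb.PosSemidef) (σ : ℝ) (hσ : 0 < σ)
    (hB : ((1 : Matrix (Fin K) (Fin K) ℝ) - A * Sb * Aᵀ).PosDef)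
    (Φ : Matrix (Fin K) (Fin N) ℝ)
    (hΦ : Φ = σ • (hB.inv.posSemidef.sqrt * A))
    (hM : ((Φ * Sb * Φᵀ + σ ^ 2 • (1 : Matrix (Fin K) (Fin K) ℝ))⁻¹).PosSemidef) :
    hM.sqrt * Φ = A := by
  set B : Matrix (Fin K) (Fin K) ℝ := (1 : Matrix (Fin K) (Fin K) ℝ) - A * Sb * Aᵀ with hBdef
  set S : Matrix (Fin K) (Fin K) ℝ := hB.inv.posSemidef.sqrt with hSdef
  have hSpsd : S.PosSemidef := hB.inv.posSemidef.posSemidef_sqrt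
  have hSS : S * S = B⁻¹ := hB.inv.posSemidef.sqrt_mul_self
  -- B is invertible
  have hBunit : IsUnit B.det := hB.det_pos.ne'.isUnit
  have hBBi : B * B⁻¹ = 1 := Matrix.mul_nonsing_inv B hBunit
  have hBiB : B⁻¹ * B = 1 := Matrix.nonsing_inv_mul B hBunit
  -- S is invertible
  have hSdet : IsUnit S.det := by
    have : S.det * S.det = B⁻¹.det := by rw [← Matrix.det_mul, hSS]
    have hBidet : B⁻¹.det ≠ 0 := hB.inv.det_pos.ne'
    refine isUnit_iff_ne_zero.mpr fun h => hBidet ?_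
    rw [← this, h, mul_zero]
  have hSSi : S * S⁻¹ = 1 := Matrix.mul_nonsing_inv S hSdet
  have hSiS : S⁻¹ * S = 1 := Matrix.nonsing_inv_mul S hSdet
  -- S⁻¹ is positive semidefinite
  have hSiH : S⁻¹.IsHermitian := hSpsd.1.inv
  have hSipsd : (S⁻¹).PosSemidef := by
    have := hSpsd.mul_mul_conjTranspose_same (S⁻¹)
    rwa [show S⁻¹ * S * (S⁻¹)ᴴ = S⁻¹ by rw [hSiS, Matrix.one_mul, hSiH.eq]] at this
  -- S⁻¹ squares to B
  have hSisq : S⁻¹ ^ 2 = B := by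
    rw [pow_two, ← Matrix.mul_inv_rev, hSS, Matrix.nonsing_inv_nonsing_inv B hBunit]
  -- hence S⁻¹ is the psd square root of B
  have hTeq : S⁻¹ = hB.posSemidef.sqrt := hSipsd.eq_sqrt_of_sq_eq hB.posSemidef hSisq
  -- compute M
  have hSBS : S * B * S = 1 := by
    have : B = S⁻¹ * S⁻¹ := by rw [← pow_two, hSisq]
    rw [this, Matrix.mul_assoc, Matrix.mul_assoc, hSiS, Matrix.mul_one, hSSi]
  have hST : Sᵀ = S := by
    have := hSpsd.1.eq
    simpa [Matrix.conjTranspose_eq_transpose_of_trivial] using this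
  have hMval : Φ * Sb * Φᵀ + σ ^ 2 • (1 : Matrix (Fin K) (Fin K) ℝ) = σ ^ 2 • B⁻¹ := by
    have hASA : A * Sb * Aᵀ = 1 - B := by rw [hBdef]; abel
    rw [hΦ]
    rw [Matrix.transpose_smul, Matrix.transpose_mul, hST]
    rw [Matrix.smul_mul, Matrix.smul_mul, Matrix.mul_smul, smul_smul]
    have : S * A * Sb * (Aᵀ * S) = B⁻¹ - 1 := by
      calc S * A * Sb * (Aᵀ * S) = S * (A * Sb * Aᵀ) * S := by
            simp only [Matrix.mul_assoc]
        _ = S * (1 - B) * S := by rw [hASA]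
        _ = S * S - S * B * S := by
            rw [Matrix.mul_sub, Matrix.sub_mul, Matrix.mul_one]
        _ = B⁻¹ - 1 := by rw [hSS, hSBS]
    rw [this, ← pow_two, smul_sub, sub_add_cancel]
  -- M⁻¹ = σ⁻² • B
  have hMinv : (Φ * Sb * Φᵀ + σ ^ 2 • (1 : Matrix (Fin K) (Fin K) ℝ))⁻¹
      = (σ ^ 2)⁻¹ • B := by
    rw [hMval]
    refine Matrix.inv_eq_right_inv ?_
    rw [Matrix.smul_mul, Matrix.mul_smul, smul_smul, hBiB,
      mul_inv_cancel₀ (by positivity : (σ:ℝ) ^ 2 ≠ 0), one_smul]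
  -- the sqrt of M⁻¹ is σ⁻¹ • S⁻¹
  have hcand : ((σ⁻¹ : ℝ) • S⁻¹).PosSemidef := by
    constructor
    · show ((σ⁻¹ : ℝ) • S⁻¹)ᴴ = _
      rw [Matrix.conjTranspose_smul, hSiH.eq]
      norm_num
    · intro x
      have := hSipsd.2 x
      exact (hSipsd.smul (by positivity : (0:ℝ) ≤ σ⁻¹)).2 x
  have hcsq : ((σ⁻¹ : ℝ) • S⁻¹) ^ 2
      = (Φ * Sb * Φᵀ + σ ^ 2 • (1 : Matrix (Fin K) (Fin K) ℝ))⁻¹ := by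
    rw [hMinv, pow_two, Matrix.smul_mul, Matrix.mul_smul, smul_smul,
      show S⁻¹ * S⁻¹ = B by rw [← pow_two, hSisq],
      show σ⁻¹ * σ⁻¹ = (σ ^ 2)⁻¹ by rw [← mul_inv, pow_two]]
  have hsqrt : hM.sqrt = (σ⁻¹ : ℝ) • S⁻¹ := (hcand.eq_sqrt_of_sq_eq hM hcsq).symm
  rw [hsqrt, hΦ, Matrix.smul_mul, Matrix.mul_smul, smul_smul,
    inv_mul_cancel₀ hσ.ne', one_smul, ← Matrix.mul_assoc, hSiS, Matrix.one_mul]
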